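/- Let X be a topological space. Suppose that for every pair of continuous maps F₁, F₂ : D² → X × I and every ε > 0 there exist continuous maps F₁', F₂' : D² → X × I with disjoint images and d(Fᵢ, Fᵢ') < ε. Then for every pair of topographical map pairs (fᵢ, τᵢ) with fᵢ : D² → X and τᵢ : D² → I, and every ε > 0, there exist approximations (fᵢ', τᵢ') with d(fᵢ, fᵢ') < ε and d(τᵢ, τᵢ') < ε such that f₁'(τ₁'⁻¹(t)) ∩ f₂'(τ₂'⁻¹(t)) = ∅ for all t ∈ I. -/

import Mathlib

open Set Metric unitInterval

/-- The closed 2-disk. -/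
abbrev Disk2 : Set (EuclideanSpace ℝ (Fin 2)) := Metric.closedBall 0 1

/-- if `X × I` has the disjoint disks (approximation) property, then `X` has
the disjoint topographies property. -/
theorem stmt_1 {X : Type*} [MetricSpace X]
    (hDD : ∀ F₁ F₂ : Disk2 → X × I, Continuous F₁ → Continuous F₂ → ∀ ε > (0 : ℝ),
      ∃ F₁' F₂' : Disk2 → X × I, Continuous F₁' ∧ Continuous F₂' ∧
        Disjoint (range F₁') (range F₂') ∧
        (∀ z, dist (F₁ z) (F₁' z) < ε) ∧ (∀ z, dist (F₂ z) (F₂' z) < ε)) :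
    ∀ (f₁ f₂ : Disk2 → X) (τ₁ τ₂ : Disk2 → I),
      Continuous f₁ → Continuous f₂ → Continuous τ₁ → Continuous τ₂ →
      ∀ ε > (0 : ℝ),
      ∃ (f₁' f₂' : Disk2 → X) (τ₁' τ₂' : Disk2 → I),
        Continuous f₁' ∧ Continuous f₂' ∧ Continuous τ₁' ∧ Continuous τ₂' ∧
        (∀ z, dist (f₁ z) (f₁' z) < ε) ∧ (∀ z, dist (f₂ z) (f₂' z) < ε) ∧
        (∀ z, dist (τ₁ z) (τ₁' z) < ε) ∧ (∀ z, dist (τ₂ z) (τ₂' z) < ε) ∧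
        ∀ t : I, f₁' '' (τ₁' ⁻¹' {t}) ∩ f₂' '' (τ₂' ⁻¹' {t}) = ∅ := by
  intro f₁ f₂ τ₁ τ₂ hf₁ hf₂ hτ₁ hτ₂ ε hε
  obtain ⟨F₁', F₂', hc₁, hc₂, hdisj, hd₁, hd₂⟩ :=
    hDD (fun z => (f₁ z, τ₁ z)) (fun z => (f₂ z, τ₂ z))
      (hf₁.prodMk hτ₁) (hf₂.prodMk hτ₂) ε hε
  refine ⟨fun z => (F₁' z).1, fun z => (F₂' z).1, fun z => (F₁' z).2, fun z => (F₂' z).2,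
    hc₁.fst, hc₂.fst, hc₁.snd, hc₂.snd, ?_, ?_, ?_, ?_, ?_⟩
  · exact fun z => lt_of_le_of_lt (le_max_left _ _) (hd₁ z)
  · exact fun z => lt_of_le_of_lt (le_max_left _ _) (hd₂ z)
  · exact fun z => lt_of_le_of_lt (le_max_right _ _) (hd₁ z)
  · exact fun z => lt_of_le_of_lt (le_max_right _ _) (hd₂ z)
  · intro t
    ext x
    simp only [mem_inter_iff, mem_image, mem_preimage, mem_singleton_iff, mem_empty_iff_false,
      iff_false, not_and]
    rintro ⟨z₁, ht₁, hx₁⟩ ⟨z₂, ht₂, hx₂⟩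
    have h1 : F₁' z₁ = (x, t) := by rw [← hx₁, ← ht₁]
    have h2 : F₂' z₂ = (x, t) := by rw [← hx₂, ← ht₂]
    exact (hdisj.ne_of_mem ⟨z₁, h1⟩ ⟨z₂, h2⟩) rfl
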